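/- Let (Ω, F, P) be a probability space with a filtration {G_k}_{k≥0}, and let {e_k}_{k≥0} and {d_k}_{k≥0} be nonnegative, integrable processes adapted to {G_k}. Suppose there are nonnegative constants b_k with Σ_{k=0}^∞ b_k < +∞ such that E[e_{k+1} | G_k] ≤ e_k + b_k − d_k almost surely for every k ≥ 0. Then Σ_{k=0}^∞ d_k < +∞ almost surely. If in addition lim_{k→∞} E e_k = 0, then e_k → 0 almost surely. -/

import Mathlib

open MeasureTheory Filter

/-- **Lemma (almost-sure convergence of nonnegative supermartingale-like processes).**
Let `(Ω, F, P)` be a probability space with a filtration `{G_k}` and let `{e_k}` and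
`{d_k}` be nonnegative integrable processes adapted to `{G_k}`.  If there are
nonnegative constants `b_k` with `Σ b_k < ∞` such that
`E[e_{k+1} | G_k] ≤ e_k + b_k − d_k` a.s. for every `k`, then `Σ_k d_k < +∞` almost
surely; if in addition `E e_k → 0`, then `e_k → 0` almost surely. -/
theorem diffusion_stochastic_lemma
    {Ω : Type*} {m0 : MeasurableSpace Ω} (P : Measure Ω) [IsProbabilityMeasure P]
    (G : Filtration ℕ m0)
    (e d : ℕ → Ω → ℝ) (b : ℕ → ℝ)
    (he_nonneg : ∀ k, ∀ ω, 0 ≤ e k ω)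
    (hd_nonneg : ∀ k, ∀ ω, 0 ≤ d k ω)
    (he_adapted : Adapted G e)
    (hd_adapted : Adapted G d)
    (he_int : ∀ k, Integrable (e k) P)
    (hd_int : ∀ k, Integrable (d k) P)
    (hb_nonneg : ∀ k, 0 ≤ b k)
    (hb_sum : Summable b)
    (hrec : ∀ k, P[e (k + 1) | G k] ≤ᵐ[P] fun ω => e k ω + b k - d k ω) :
    (∀ᵐ ω ∂P, Summable fun k => d k ω) ∧
      (Tendsto (fun k => ∫ ω, e k ω ∂P) atTop (nhds 0) →
        ∀ᵐ ω ∂P, Tendsto (fun k => e k ω) atTop (nhds 0)) := by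
  classical
  -- tail sums of b
  set B : ℕ → ℝ := fun k => ∑' j, b (j + k) with hBdef
  have hBsum : ∀ k, Summable fun j => b (j + k) := fun k => (summable_nat_add_iff k).mpr hb_sum
  have hBnonneg : ∀ k, 0 ≤ B k := fun k => tsum_nonneg fun j => hb_nonneg _
  have hBstep : ∀ k, B k = b k + B (k + 1) := by
    intro k
    have h1 : B k = b (0 + k) + ∑' j, b (j + 1 + k) := Summable.tsum_eq_zero_add (hBsum k)
    have h2 : (∑' j, b (j + 1 + k)) = ∑' j, b (j + (k + 1)) := by
      apply tsum_congr; intro j; congr 1; omega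
    simpa [h2] using h1
  have hBtendsto : Tendsto B atTop (nhds 0) := by
    have h1 : ∀ k, B k = (∑' i, b i) - ∑ i ∈ Finset.range k, b i := by
      intro k
      have := Summable.sum_add_tsum_nat_add (f := b) k hb_sum
      linarith
    have h2 : Tendsto (fun k => (∑' i, b i) - ∑ i ∈ Finset.range k, b i) atTop
        (nhds ((∑' i, b i) - ∑' i, b i)) :=
      (tendsto_const_nhds).sub hb_sum.hasSum.tendsto_sum_nat
    rw [sub_self] at h2
    exact h2.congr fun k => (h1 k).symm
  -- the auxiliary supermartingale
  set S : ℕ → Ω → ℝ := fun k ω => ∑ j ∈ Finset.range k, d j ω with hSdef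
  set x : ℕ → Ω → ℝ := fun k => e k + fun ω => S k ω + B k with hxdef
  have hx_apply : ∀ k ω, x k ω = e k ω + (S k ω + B k) := fun k ω => rfl
  have hS_sm : ∀ k, StronglyMeasurable[G k] (S k) := by
    intro k
    apply Finset.stronglyMeasurable_fun_sum
    intro j hj
    exact (hd_adapted j).stronglyMeasurable.mono (G.mono (le_of_lt (Finset.mem_range.mp hj)))
  have hS_int : ∀ k, Integrable (S k) P := fun k =>
    integrable_finset_sum _ fun j _ => hd_int j
  have hx_adapted : Adapted G x := fun k =>
    (he_adapted k).add ((hS_sm k).add stronglyMeasurable_const).measurable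
  have hx_int : ∀ k, Integrable (x k) P := fun k =>
    (he_int k).add ((hS_int k).add (integrable_const _))
  have hx_super : Supermartingale x G P := by
    refine supermartingale_nat hx_adapted.stronglyAdapted hx_int fun k => ?_
    have hadd : P[x (k + 1) | G k] =ᵐ[P]
        P[e (k + 1) | G k] + P[(fun ω => S (k + 1) ω + B (k + 1)) | G k] :=
      condExp_add (he_int (k + 1)) ((hS_int (k + 1)).add (integrable_const _)) (G k)
    have hmeas : P[(fun ω => S (k + 1) ω + B (k + 1)) | G k]
        = fun ω => S (k + 1) ω + B (k + 1) := by
      refine condExp_of_stronglyMeasurable (G.le k) ?_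
        ((hS_int (k + 1)).add (integrable_const _))
      refine StronglyMeasurable.add ?_ stronglyMeasurable_const
      apply Finset.stronglyMeasurable_fun_sum
      intro j hj
      exact (hd_adapted j).stronglyMeasurable.mono (G.mono (Nat.lt_succ_iff.mp (Finset.mem_range.mp hj)))
    filter_upwards [hadd, hrec k] with ω h1 h2
    have h3 : S (k + 1) ω = S k ω + d k ω := Finset.sum_range_succ _ _
    have h4 := hBstep k
    rw [hx_apply]
    calc (P[x (k + 1) | G k]) ω
        = (P[e (k + 1) | G k]) ω + (S (k + 1) ω + B (k + 1)) := by rw [h1, hmeas]; rfl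
      _ ≤ (e k ω + b k - d k ω) + (S (k + 1) ω + B (k + 1)) := by linarith
      _ = e k ω + (S k ω + B k) := by rw [h3]; linarith
  -- L¹ boundedness and a.s. convergence of x
  have hx_nonneg : ∀ k ω, 0 ≤ x k ω := by
    intro k ω
    rw [hx_apply]
    have : 0 ≤ S k ω := Finset.sum_nonneg fun j _ => hd_nonneg j ω
    have := hBnonneg k
    have := he_nonneg k ω
    linarith
  have hx_integral_le : ∀ k, ∫ ω, x k ω ∂P ≤ ∫ ω, x 0 ω ∂P := by
    intro k
    have h1 : P[x k | G 0] ≤ᵐ[P] x 0 := hx_super.2.1 0 k (Nat.zero_le k)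
    have h2 : ∫ ω, (P[x k | G 0]) ω ∂P = ∫ ω, x k ω ∂P := integral_condExp (G.le 0)
    calc ∫ ω, x k ω ∂P = ∫ ω, (P[x k | G 0]) ω ∂P := h2.symm
      _ ≤ ∫ ω, x 0 ω ∂P := integral_mono_ae integrable_condExp (hx_int 0) h1
  have hbdd : ∀ n, eLpNorm (x n) 1 P ≤ (∫ ω, x 0 ω ∂P).toNNReal := by
    intro n
    have h1 : eLpNorm (x n) 1 P = ENNReal.ofReal (∫ ω, ‖x n ω‖ ∂P) := by
      rw [eLpNorm_one_eq_lintegral_enorm,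
        ← ofReal_integral_norm_eq_lintegral_enorm (hx_int n)]
    have h2 : (∫ ω, ‖x n ω‖ ∂P) = ∫ ω, x n ω ∂P := by
      congr 1; funext ω; exact Real.norm_of_nonneg (hx_nonneg n ω)
    rw [h1, h2]
    exact ENNReal.ofReal_le_ofReal (hx_integral_le n)
  have hx_conv : ∀ᵐ ω ∂P, ∃ c, Tendsto (fun n => x n ω) atTop (nhds c) := by
    have := (hx_super.neg.exists_ae_tendsto_of_bdd
      (R := (∫ ω, x 0 ω ∂P).toNNReal)) (fun n => by
        simpa [eLpNorm_neg] using hbdd n)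
    filter_upwards [this] with ω ⟨c, hc⟩
    exact ⟨-c, by simpa using hc.neg⟩
  -- part 1: summability of d
  have hsummable : ∀ᵐ ω ∂P, Summable fun k => d k ω := by
    filter_upwards [hx_conv] with ω hω
    obtain ⟨c, hc⟩ := hω
    by_contra hns
    have htop : Tendsto (fun n => ∑ j ∈ Finset.range n, d j ω) atTop atTop :=
      (not_summable_iff_tendsto_nat_atTop_of_nonneg (fun j => hd_nonneg j ω)).mp hns
    have hle : ∀ n, (∑ j ∈ Finset.range n, d j ω) ≤ x n ω := by
      intro n
      rw [hx_apply]
      have := he_nonneg n ω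
      have := hBnonneg n
      show (∑ j ∈ Finset.range n, d j ω) ≤ _
      linarith
    exact not_tendsto_atTop_of_tendsto_nhds hc (tendsto_atTop_mono hle htop)
  refine ⟨hsummable, fun hE => ?_⟩
  -- part 2
  have he_meas : ∀ k, Measurable (e k) := fun k =>
    (he_adapted k).mono (G.le k) le_rfl
  -- Fatou argument: the liminf of e is a.e. zero
  have hf_meas : ∀ k, Measurable fun ω => ENNReal.ofReal (e k ω) := fun k =>
    (he_meas k).ennreal_ofReal
  have hlint : ∀ k, (∫⁻ ω, ENNReal.ofReal (e k ω) ∂P) = ENNReal.ofReal (∫ ω, e k ω ∂P) := by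
    intro k
    rw [ofReal_integral_eq_lintegral_ofReal (he_int k)
      (Eventually.of_forall fun ω => he_nonneg k ω)]
  have hliminf0 : ∀ᵐ ω ∂P, liminf (fun k => ENNReal.ofReal (e k ω)) atTop = 0 := by
    have hfatou :
        (∫⁻ ω, liminf (fun k => ENNReal.ofReal (e k ω)) atTop ∂P)
          ≤ liminf (fun k => ∫⁻ ω, ENNReal.ofReal (e k ω) ∂P) atTop :=
      lintegral_liminf_le hf_meas
    have hE' : Tendsto (fun k => ∫⁻ ω, ENNReal.ofReal (e k ω) ∂P) atTop (nhds 0) := by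
      simp only [hlint]
      have := (ENNReal.continuous_ofReal.tendsto 0).comp hE
      simpa [Function.comp_def] using this
    rw [hE'.liminf_eq] at hfatou
    have h0 : (∫⁻ ω, liminf (fun k => ENNReal.ofReal (e k ω)) atTop ∂P) = 0 :=
      le_antisymm hfatou zero_le
    have hm : Measurable fun ω => liminf (fun k => ENNReal.ofReal (e k ω)) atTop :=
      Measurable.liminf hf_meas
    exact (lintegral_eq_zero_iff hm).mp h0
  filter_upwards [hx_conv, hsummable, hliminf0] with ω hω hsum hlim0
  obtain ⟨c, hc⟩ := hω
  -- e tends to some limit L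
  have hS_tendsto : Tendsto (fun n => S n ω) atTop (nhds (∑' j, d j ω)) :=
    hsum.hasSum.tendsto_sum_nat
  have he_eq : ∀ n, e n ω = x n ω - (S n ω + B n) := by
    intro n; rw [hx_apply]; ring
  have he_tendsto : Tendsto (fun n => e n ω) atTop (nhds (c - ((∑' j, d j ω) + 0))) := by
    simp only [he_eq]
    exact hc.sub (hS_tendsto.add hBtendsto)
  set L : ℝ := c - ((∑' j, d j ω) + 0) with hLdef
  have hL_nonneg : 0 ≤ L :=
    le_of_tendsto_of_tendsto' tendsto_const_nhds he_tendsto fun n => he_nonneg n ω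
  have hL_le : ENNReal.ofReal L = 0 := by
    have : Tendsto (fun k => ENNReal.ofReal (e k ω)) atTop (nhds (ENNReal.ofReal L)) :=
      (ENNReal.continuous_ofReal.tendsto L).comp he_tendsto
    rw [← this.liminf_eq]; exact hlim0
  have hL0 : L = 0 := le_antisymm (by simpa using ENNReal.ofReal_eq_zero.mp hL_le) hL_nonneg
  rw [hL0] at he_tendsto
  exact he_tendsto
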